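/- Let L_MSP be the labeling of order 3 whose rows (for q = 1,…,8) are 000, 001, 010, 111, 100, 101, 110, 011, and let N_3 be the NBC of order 3 (rows 000,001,010,011,100,101,110,111). Then there is no invertible 3×3 matrix T over GF(2) such that L_MSP(q) = N_3(q) T for all q = 1,…,8; i.e., L_MSP and N_3 belong to different modified Hadamard classes. In particular, the NBC does not span all labelings that follow the set-partitioning principle for 8-PSK. -/

import Mathlib

/-- The natural binary code (NBC) of order `m`. -/
def NBC (m : ℕ) : Fin (2 ^ m) → Fin m → ZMod 2 :=
  fun q l => if Nat.testBit (q : ℕ) (m - 1 - (l : ℕ)) then 1 else 0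

/-- The modified set-partitioning labeling: rows 000,001,010,111,100,101,110,011. -/
def L_MSP : Fin (2 ^ 3) → Fin 3 → ZMod 2 :=
  ![![0,0,0], ![0,0,1], ![0,1,0], ![1,1,1], ![1,0,0], ![1,0,1], ![1,1,0], ![0,1,1]]

/-- The 8-PSK constellation: `x_q = (cos(2πq/8), sin(2πq/8))` (0-indexed `q`). -/
noncomputable def x8PSK (q : Fin (2 ^ 3)) : EuclideanSpace ℝ (Fin 2) :=
  (WithLp.equiv 2 (Fin 2 → ℝ)).symm
    ![Real.cos (2 * Real.pi * (q : ℕ) / 8), Real.sin (2 * Real.pi * (q : ℕ) / 8)]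

/-- The minimum intra-Euclidean distance `δ_l` of 8-PSK with labeling `L`. -/
noncomputable def delta8PSK (L : Fin (2 ^ 3) → Fin 3 → ZMod 2) (l : ℕ) : ℝ :=
  sInf {d : ℝ | ∃ q q' : Fin (2 ^ 3), q ≠ q' ∧
    (∀ j : Fin 3, 3 - l ≤ (j : ℕ) → L q j = L q' j) ∧
    d = dist (x8PSK q) (x8PSK q')}

open Real

lemma dist_x8 (q q' : Fin (2^3)) :
    dist (x8PSK q) (x8PSK q') =
      Real.sqrt (2 - 2 * Real.cos (π * ((q : ℕ) - (q' : ℕ) : ℝ) / 4)) := by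
  rw [EuclideanSpace.dist_eq]
  congr 1
  simp only [x8PSK, WithLp.equiv_symm_apply, PiLp.toLp_apply, Fin.sum_univ_two]
  rw [Real.dist_eq, Real.dist_eq, sq_abs, sq_abs]
  simp only [Matrix.cons_val_zero, Matrix.cons_val_one, Matrix.head_cons]
  have h : π * ((q : ℕ) - (q' : ℕ) : ℝ) / 4
      = 2 * π * (q : ℕ) / 8 - 2 * π * (q' : ℕ) / 8 := by ring
  rw [h, Real.cos_sub]
  nlinarith [Real.sin_sq_add_cos_sq (2 * π * (q : ℕ) / 8),
    Real.sin_sq_add_cos_sq (2 * π * (q' : ℕ) / 8)]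

lemma cosv1 : Real.cos (π * 1 / 4) = Real.sqrt 2 / 2 := by
  rw [show π * 1 / 4 = π / 4 by ring, Real.cos_pi_div_four]
lemma cosv2 : Real.cos (π * 2 / 4) = 0 := by
  rw [show π * 2 / 4 = π / 2 by ring, Real.cos_pi_div_two]
lemma cosv3 : Real.cos (π * 3 / 4) = -(Real.sqrt 2 / 2) := by
  rw [show π * 3 / 4 = π - π / 4 by ring, Real.cos_pi_sub, Real.cos_pi_div_four]
lemma cosv4 : Real.cos (π * 4 / 4) = -1 := by
  rw [show π * 4 / 4 = π by ring, Real.cos_pi]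
lemma cosv5 : Real.cos (π * 5 / 4) = -(Real.sqrt 2 / 2) := by
  rw [show π * 5 / 4 = π + π / 4 by ring, Real.cos_add]
  simp [Real.cos_pi_div_four]
lemma cosv6 : Real.cos (π * 6 / 4) = 0 := by
  rw [show π * 6 / 4 = π + π / 2 by ring, Real.cos_add]
  simp
lemma cosv7 : Real.cos (π * 7 / 4) = Real.sqrt 2 / 2 := by
  rw [show π * 7 / 4 = 2 * π - π / 4 by ring, Real.cos_sub]
  simp [Real.cos_pi_div_four]

/-- distance with natural-number difference, assuming `q' ≤ q`. -/
lemma dist_x8_nat (q q' : Fin (2^3)) (h : (q' : ℕ) ≤ (q : ℕ)) :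
    dist (x8PSK q) (x8PSK q') =
      Real.sqrt (2 - 2 * Real.cos (π * (((q:ℕ) - (q':ℕ) : ℕ) : ℝ) / 4)) := by
  rw [dist_x8]
  congr 3
  push_cast [Nat.cast_sub h]
  ring

lemma sqrt2_lt_two : Real.sqrt 2 < 2 := by
  nlinarith [Real.sq_sqrt (by norm_num : (0:ℝ) ≤ 2), Real.sqrt_nonneg 2]

lemma sqrt2_pos : (0:ℝ) < Real.sqrt 2 := Real.sqrt_pos.mpr (by norm_num)

/-- lower bound for all distinct pairs (ordered). -/
lemma lb0' (q q' : Fin (2^3)) (h : (q' : ℕ) < (q : ℕ)) :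
    Real.sqrt (2 - Real.sqrt 2) ≤ dist (x8PSK q) (x8PSK q') := by
  rw [dist_x8_nat q q' h.le]
  apply Real.sqrt_le_sqrt
  have h7 : (q : ℕ) - (q' : ℕ) ≤ 7 := by omega
  have h1 : 1 ≤ (q : ℕ) - (q' : ℕ) := by omega
  have s2 := sqrt2_pos
  set k := (q : ℕ) - (q' : ℕ) with hk
  interval_cases k <;> push_cast <;>
    first
      | (rw [cosv1]; ring_nf; linarith)
      | (rw [cosv2]; linarith)
      | (rw [cosv3]; linarith)
      | (rw [cosv4]; linarith)
      | (rw [cosv5]; linarith)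
      | (rw [cosv6]; linarith)
      | (rw [cosv7]; ring_nf; linarith)

lemma lb1' (q q' : Fin (2^3)) (h : (q' : ℕ) < (q : ℕ))
    (hp : (q : ℕ) % 2 = (q' : ℕ) % 2) :
    Real.sqrt 2 ≤ dist (x8PSK q) (x8PSK q') := by
  rw [dist_x8_nat q q' h.le]
  have hsq : Real.sqrt 2 = Real.sqrt 2 := rfl
  have hk : (q : ℕ) - (q' : ℕ) = 2 ∨ (q : ℕ) - (q' : ℕ) = 4 ∨ (q : ℕ) - (q' : ℕ) = 6 := by
    omega
  have : Real.cos (π * (((q:ℕ) - (q':ℕ) : ℕ) : ℝ) / 4) ≤ 0 := by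
    rcases hk with hk | hk | hk <;> rw [hk] <;> push_cast
    · rw [cosv2]
    · rw [cosv4]; norm_num
    · rw [cosv6]
  calc Real.sqrt 2 = Real.sqrt 2 := rfl
    _ ≤ _ := by apply Real.sqrt_le_sqrt; linarith

lemma dist_k4 (q q' : Fin (2^3)) (h : (q : ℕ) = (q' : ℕ) + 4) :
    dist (x8PSK q) (x8PSK q') = 2 := by
  rw [dist_x8_nat q q' (by omega)]
  rw [show (q:ℕ) - (q':ℕ) = 4 by omega]
  push_cast
  rw [cosv4]
  rw [show (2 : ℝ) - 2 * (-1) = 4 by norm_num]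
  rw [show (4:ℝ) = 2^2 by norm_num, Real.sqrt_sq (by norm_num)]

/-- There is no invertible `3×3` matrix `T` over GF(2) with
`L_MSP = N_3 T`, i.e., `L_MSP` and the NBC belong to different modified Hadamard
classes. In particular, there exists a (bijective) labeling following the
set-partitioning principle for 8-PSK that is not in the modified Hadamard class of
the NBC. -/
theorem stmt_13 :
    (¬ ∃ T : Matrix (Fin 3) (Fin 3) (ZMod 2), IsUnit T ∧
        ∀ q, L_MSP q = Matrix.vecMul (NBC 3 q) T) ∧
    ∃ L : Fin (2 ^ 3) → Fin 3 → ZMod 2, Function.Bijective L ∧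
      (delta8PSK L 0 < delta8PSK L 1 ∧ delta8PSK L 1 < delta8PSK L 2) ∧
      ¬ ∃ T : Matrix (Fin 3) (Fin 3) (ZMod 2), IsUnit T ∧
        ∀ q, L q = Matrix.vecMul (NBC 3 q) T := by
  have hnoT : ¬ ∃ T : Matrix (Fin 3) (Fin 3) (ZMod 2), IsUnit T ∧
      ∀ q, L_MSP q = Matrix.vecMul (NBC 3 q) T := by
    rintro ⟨T, -, h⟩
    have n1 : NBC 3 1 = ![0,0,1] := by decide
    have n2 : NBC 3 2 = ![0,1,0] := by decide
    have n3 : NBC 3 3 = ![0,1,1] := by decide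
    have e1 := congrFun (h 1) 0
    have e2 := congrFun (h 2) 0
    have e3 := congrFun (h 3) 0
    rw [n1] at e1; rw [n2] at e2; rw [n3] at e3
    simp [Matrix.vecMul, dotProduct, Fin.sum_univ_three, L_MSP] at e1 e2 e3
    rw [← e1, ← e2] at e3
    simp at e3
  refine ⟨hnoT, L_MSP, by decide, ⟨?_, ?_⟩, hnoT⟩
  · -- δ₀ = √(2 - √2) < √2 = δ₁
    have h0 : delta8PSK L_MSP 0 = Real.sqrt (2 - Real.sqrt 2) := by
      apply IsLeast.csInf_eq
      constructor
      · exact ⟨1, 0, by decide, fun j hj => absurd hj (by omega),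
          by rw [dist_x8_nat 1 0 (by decide)]; norm_num [cosv1]; ring_nf⟩
      · rintro d ⟨q, q', hne, -, rfl⟩
        rcases Ne.lt_or_gt (fun hv : (q:ℕ) = (q':ℕ) => hne (Fin.ext hv)) with hlt | hlt
        · rw [dist_comm]; exact lb0' q' q hlt
        · exact lb0' q q' hlt
    have h1 : delta8PSK L_MSP 1 = Real.sqrt 2 := by
      apply IsLeast.csInf_eq
      constructor
      · refine ⟨2, 0, by decide, ?_, ?_⟩
        · intro j hj
          have : j = 2 := by omega
          subst this; decide
        · rw [dist_x8_nat 2 0 (by decide)]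
          norm_num [cosv2]
      · rintro d ⟨q, q', hne, hcond, rfl⟩
        have hpar : (q : ℕ) % 2 = (q' : ℕ) % 2 := by
          have h2 := hcond 2 (by norm_num)
          revert h2
          revert q q'
          decide
        rcases Ne.lt_or_gt (fun hv : (q:ℕ) = (q':ℕ) => hne (Fin.ext hv)) with hlt | hlt
        · rw [dist_comm]; exact lb1' q' q hlt hpar.symm
        · exact lb1' q q' hlt hpar
    rw [h0, h1]
    apply Real.sqrt_lt_sqrt
    · nlinarith [sqrt2_lt_two]
    · linarith [sqrt2_pos]
  · -- δ₁ = √2 < 2 = δ₂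
    have h1 : delta8PSK L_MSP 1 = Real.sqrt 2 := by
      apply IsLeast.csInf_eq
      constructor
      · refine ⟨2, 0, by decide, ?_, ?_⟩
        · intro j hj
          have : j = 2 := by omega
          subst this; decide
        · rw [dist_x8_nat 2 0 (by decide)]
          norm_num [cosv2]
      · rintro d ⟨q, q', hne, hcond, rfl⟩
        have hpar : (q : ℕ) % 2 = (q' : ℕ) % 2 := by
          have h2 := hcond 2 (by norm_num)
          revert h2
          revert q q'
          decide
        rcases Ne.lt_or_gt (fun hv : (q:ℕ) = (q':ℕ) => hne (Fin.ext hv)) with hlt | hlt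
        · rw [dist_comm]; exact lb1' q' q hlt hpar.symm
        · exact lb1' q q' hlt hpar
    have h2 : delta8PSK L_MSP 2 = 2 := by
      apply IsLeast.csInf_eq
      constructor
      · refine ⟨4, 0, by decide, ?_, ?_⟩
        · intro j hj
          fin_cases j
          · exact absurd hj (by simp)
          · decide
          · decide
        · rw [dist_k4 4 0 (by decide)]
      · rintro d ⟨q, q', hne, hcond, rfl⟩
        have hk : (q : ℕ) = (q' : ℕ) + 4 ∨ (q' : ℕ) = (q : ℕ) + 4 := by
          have ha := hcond 1 (by norm_num)
          have hb := hcond 2 (by norm_num)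
          revert ha hb hne
          revert q q'
          decide
        rcases hk with hk | hk
        · rw [dist_k4 q q' hk]
        · rw [dist_comm, dist_k4 q' q hk]
    rw [h1, h2]
    exact sqrt2_lt_two
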